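/- Assume C_R ⊆ m_R². Then for all α, β ∈ C_R/x₁ := {c/x₁ : c ∈ C_R} ⊆ k⟦t⟧ one has α·β ∈ C_R. Consequently, the k-subalgebra S = R[C_R/x₁] of k⟦t⟧ generated by R and C_R/x₁ equals R + C_R/x₁ = R + t^{c_R − a₁}·k⟦t⟧ as a subset of k⟦t⟧. -/

import Mathlib

open PowerSeries
set_option synthInstance.maxHeartbeats 1000000
set_option maxHeartbeats 1000000

noncomputable section

def mxl {k : Type*} [Field k] (R : Subalgebra k (PowerSeries k)) : Ideal R :=
  RingHom.ker ((constantCoeff : PowerSeries k →+* k).comp R.val.toRingHom)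

lemma aux_factor {k : Type*} [Field k] {f : PowerSeries k} (hf : f ≠ 0) (n : ℕ)
    (hn : f.order = n) : ∃ u : (PowerSeries k)ˣ, f = X ^ n * (u : PowerSeries k) := by
  refine ⟨Unit_of_divided_by_X_pow_order f, ?_⟩
  rw [Unit_of_divided_by_X_pow_order_nonzero hf]
  have h := (X_pow_order_mul_divXPowOrder (f := f)).symm
  rw [hn, ENat.toNat_coe] at h; exact h

lemma aux_dvd {k : Type*} [Field k] {f : PowerSeries k} {n : ℕ} (h : (n : ℕ∞) ≤ f.order) :
    (X : PowerSeries k) ^ n ∣ f :=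
  X_pow_dvd_iff.2 fun m hm => coeff_of_lt_order _ (lt_of_lt_of_le (by exact_mod_cast hm) h)

theorem stmt5 {k : Type*} [Field k] [IsAlgClosed k] [CharZero k]
    (R : Subalgebra k (PowerSeries k)) (hR : R ≠ ⊤)
    (hN : ∃ N : ℕ, 1 ≤ N ∧ ∀ g : PowerSeries k, (X : PowerSeries k) ^ N * g ∈ R)
    (c : ℕ) (hc : IsLeast {n : ℕ | ∀ g : PowerSeries k, (X : PowerSeries k) ^ n * g ∈ R} c)
    (a1 : ℕ) (ha1pos : 0 < a1) (x1 : PowerSeries k) (hx1R : x1 ∈ R)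
    (hx1ord : x1.order = a1)
    (ha1min : ∀ f ∈ R, f ≠ 0 → (constantCoeff : PowerSeries k →+* k) f = 0 → (a1 : ℕ∞) ≤ f.order)
    (hC : ∀ r : R, (∀ g : PowerSeries k, (r : PowerSeries k) * g ∈ R) → r ∈ (mxl R) ^ 2) :
    -- products of two elements of C_R/x₁ land in C_R
    (∀ α β : PowerSeries k, (∀ g : PowerSeries k, (x1 * α) * g ∈ R) →
      (∀ g : PowerSeries k, (x1 * β) * g ∈ R) → ∀ g : PowerSeries k, (α * β) * g ∈ R) ∧
    -- S = R + C_R/x₁ as a subset of k⟦t⟧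
    ((Algebra.adjoin k ((R : Set (PowerSeries k)) ∪
        {h : PowerSeries k | ∀ g : PowerSeries k, (x1 * h) * g ∈ R}) : Set (PowerSeries k))
      = {f : PowerSeries k | ∃ r ∈ R, ∃ h : PowerSeries k,
          (∀ g : PowerSeries k, (x1 * h) * g ∈ R) ∧ f = r + h}) ∧
    -- S = R + t^(c_R - a₁)·k⟦t⟧ as a subset of k⟦t⟧
    ((Algebra.adjoin k ((R : Set (PowerSeries k)) ∪
        {h : PowerSeries k | ∀ g : PowerSeries k, (x1 * h) * g ∈ R}) : Set (PowerSeries k))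
      = {f : PowerSeries k | ∃ r ∈ R, ∃ g : PowerSeries k,
          f = r + (X : PowerSeries k) ^ (c - a1) * g}) := by
  have hx1ne : x1 ≠ 0 := by
    intro h
    rw [h, order_zero] at hx1ord
    exact (by simp : (⊤ : ℕ∞) ≠ (a1 : ℕ∞)) hx1ord
  obtain ⟨u, hu⟩ := aux_factor hx1ne a1 hx1ord
  -- elements of the maximal ideal have order ≥ a1
  have hmord : ∀ r : R, r ∈ mxl R → (a1 : ℕ∞) ≤ (r : PowerSeries k).order := by
    intro r hr
    by_cases h0 : (r : PowerSeries k) = 0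
    · rw [h0, order_zero]; exact le_top
    · exact ha1min r r.2 h0 (by simpa [mxl, RingHom.mem_ker] using hr)
  -- elements of the square of the maximal ideal have order ≥ 2a1
  have hsq : ∀ r : R, r ∈ (mxl R) ^ 2 → ((a1 : ℕ∞) + a1) ≤ (r : PowerSeries k).order := by
    intro r hr
    rw [sq] at hr
    refine Submodule.mul_induction_on hr ?_ ?_
    · intro m hm n hn
      calc ((a1 : ℕ∞) + a1) ≤ (m : PowerSeries k).order + (n : PowerSeries k).order :=
            add_le_add (hmord m hm) (hmord n hn)
        _ ≤ ((m : PowerSeries k) * (n : PowerSeries k)).order := le_order_mul _ _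
        _ = ((m * n : R) : PowerSeries k).order := by norm_cast
    · intro x y hx hy
      have h := min_order_le_order_add (x : PowerSeries k) (y : PowerSeries k)
      have h2 : ((x + y : R) : PowerSeries k) = (x : PowerSeries k) + y := by norm_cast
      rw [h2]
      exact le_trans (le_min hx hy) h
  -- elements of C_R/x1 are divisible by x1
  have hdiv : ∀ h : PowerSeries k, (∀ g : PowerSeries k, (x1 * h) * g ∈ R) →
      ∃ w : PowerSeries k, h = x1 * w := by
    intro h hh
    by_cases h0 : h = 0
    · exact ⟨0, by simp [h0]⟩
    have hmem : x1 * h ∈ R := by simpa using hh 1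
    have hsqmem : (⟨x1 * h, hmem⟩ : R) ∈ (mxl R) ^ 2 := hC ⟨x1 * h, hmem⟩ (fun g => hh g)
    have hord := hsq _ hsqmem
    have hord2 : ((a1 : ℕ∞) + a1) ≤ (a1 : ℕ∞) + h.order := by
      calc ((a1 : ℕ∞) + a1) ≤ (x1 * h).order := hord
        _ = (a1 : ℕ∞) + h.order := by rw [order_mul, hx1ord]
    have hha1 : (a1 : ℕ∞) ≤ h.order :=
      (WithTop.add_le_add_iff_left (by simp : (a1 : ℕ∞) ≠ ⊤)).mp hord2
    obtain ⟨v, hv⟩ := aux_dvd hha1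
    refine ⟨(u⁻¹ : (PowerSeries k)ˣ) * v, ?_⟩
    rw [hu, hv]
    rw [mul_assoc, ← mul_assoc (u : PowerSeries k), Units.mul_inv, one_mul]
  -- Part 1
  have part1 : ∀ α β : PowerSeries k, (∀ g : PowerSeries k, (x1 * α) * g ∈ R) →
      (∀ g : PowerSeries k, (x1 * β) * g ∈ R) → ∀ g : PowerSeries k, (α * β) * g ∈ R := by
    intro α β hα hβ g
    obtain ⟨w, hw⟩ := hdiv α hα
    have heq : (α * β) * g = (x1 * β) * (w * g) := by rw [hw]; ring
    rw [heq]; exact hβ _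
  -- conductor elements are divisible by X^c
  have hcond : ∀ f : PowerSeries k, (∀ g : PowerSeries k, f * g ∈ R) →
      ∃ w : PowerSeries k, f = X ^ c * w := by
    intro f hf
    by_cases h0 : f = 0
    · exact ⟨0, by simp [h0]⟩
    have hfin : f.order < ⊤ := order_finite_iff_ne_zero.2 h0
    set n := f.order.lift hfin with hn
    have hordn : f.order = (n : ℕ∞) := by simp [hn]
    obtain ⟨v, hv⟩ := aux_factor h0 n hordn
    have hcn : c ≤ n := by
      refine hc.2 ?_
      intro g
      have : (X : PowerSeries k) ^ n * g = f * (((v⁻¹ : (PowerSeries k)ˣ) : PowerSeries k) * g) := by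
        rw [hv, mul_assoc, ← mul_assoc (v : PowerSeries k), Units.mul_inv, one_mul]
      rw [this]; exact hf _
    refine ⟨X ^ (n - c) * (v : PowerSeries k), ?_⟩
    rw [hv, ← mul_assoc, ← pow_add, Nat.add_sub_cancel' hcn]
  -- a1 ≤ c
  have hXcR : (X : PowerSeries k) ^ c ∈ R := by simpa using hc.1 1
  have hac : a1 + a1 ≤ c := by
    have hm2 := hC ⟨X ^ c, hXcR⟩ (fun g => hc.1 g)
    have := hsq _ hm2
    have hXo : ((X : PowerSeries k) ^ c).order = (c : ℕ∞) := order_X_pow c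
    rw [show ((⟨X ^ c, hXcR⟩ : R) : PowerSeries k) = X ^ c from rfl, hXo] at this
    exact_mod_cast this
  have ha1c : a1 ≤ c := le_trans (Nat.le_add_left a1 a1) hac
  -- the set C_R/x1 equals X^(c-a1) * k⟦t⟧
  have hMeq : ∀ h : PowerSeries k, (∀ g : PowerSeries k, (x1 * h) * g ∈ R) ↔
      ∃ w : PowerSeries k, h = X ^ (c - a1) * w := by
    intro h
    constructor
    · intro hh
      obtain ⟨w, hw⟩ := hcond (x1 * h) hh
      have hXa : (X : PowerSeries k) ^ a1 ≠ 0 := pow_ne_zero _ X_ne_zero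
      have hcan : (u : PowerSeries k) * h = X ^ (c - a1) * w := by
        apply mul_left_cancel₀ hXa
        calc (X : PowerSeries k) ^ a1 * ((u : PowerSeries k) * h) = x1 * h := by
              rw [hu, mul_assoc]
          _ = X ^ c * w := hw
          _ = X ^ a1 * (X ^ (c - a1) * w) := by
              rw [← mul_assoc, ← pow_add, Nat.add_sub_cancel' ha1c]
      refine ⟨((u⁻¹ : (PowerSeries k)ˣ) : PowerSeries k) * w, ?_⟩
      calc h = ((u⁻¹ : (PowerSeries k)ˣ) : PowerSeries k) * ((u : PowerSeries k) * h) := by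
            rw [← mul_assoc, Units.inv_mul, one_mul]
        _ = X ^ (c - a1) * (((u⁻¹ : (PowerSeries k)ˣ) : PowerSeries k) * w) := by
            rw [hcan, ← mul_assoc, mul_comm ((u⁻¹ : (PowerSeries k)ˣ) : PowerSeries k),
              mul_assoc]
    · rintro ⟨w, rfl⟩ g
      have heq : (x1 * (X ^ (c - a1) * w)) * g = X ^ c * ((u : PowerSeries k) * w * g) := by
        have hpow : (X : PowerSeries k) ^ c = X ^ a1 * X ^ (c - a1) := by
          rw [← pow_add, Nat.add_sub_cancel' ha1c]
        rw [hu, hpow]; ring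
      rw [heq]; exact hc.1 _
  -- The RHS set of part 2 is a subalgebra
  have hM0 : ∀ g : PowerSeries k, (x1 * (0 : PowerSeries k)) * g ∈ R := by
    intro g; simpa using R.zero_mem
  have hMadd : ∀ h1 h2 : PowerSeries k, (∀ g : PowerSeries k, (x1 * h1) * g ∈ R) →
      (∀ g : PowerSeries k, (x1 * h2) * g ∈ R) →
      ∀ g : PowerSeries k, (x1 * (h1 + h2)) * g ∈ R := by
    intro h1 h2 hh1 hh2 g
    have : (x1 * (h1 + h2)) * g = (x1 * h1) * g + (x1 * h2) * g := by ring
    rw [this]; exact R.add_mem (hh1 g) (hh2 g)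
  have hMsmul : ∀ (p h : PowerSeries k), (∀ g : PowerSeries k, (x1 * h) * g ∈ R) →
      ∀ g : PowerSeries k, (x1 * (p * h)) * g ∈ R := by
    intro p h hh g
    have : (x1 * (p * h)) * g = (x1 * h) * (p * g) := by ring
    rw [this]; exact hh _
  set T : Subalgebra k (PowerSeries k) :=
    { carrier := {f : PowerSeries k | ∃ r ∈ R, ∃ h : PowerSeries k,
        (∀ g : PowerSeries k, (x1 * h) * g ∈ R) ∧ f = r + h}
      mul_mem' := by
        rintro a b ⟨r1, hr1, h1, hh1, rfl⟩ ⟨r2, hr2, h2, hh2, rfl⟩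
        refine ⟨r1 * r2 + h1 * h2, R.add_mem (R.mul_mem hr1 hr2)
          (by simpa using part1 h1 h2 hh1 hh2 1), r1 * h2 + h1 * r2, ?_, by ring⟩
        exact hMadd _ _ (hMsmul r1 h2 hh2) (fun g => by
          have : (x1 * (h1 * r2)) * g = (x1 * (r2 * h1)) * g := by ring
          rw [this]; exact hMsmul r2 h1 hh1 g)
      one_mem' := ⟨1, R.one_mem, 0, hM0, by simp⟩
      add_mem' := by
        rintro a b ⟨r1, hr1, h1, hh1, rfl⟩ ⟨r2, hr2, h2, hh2, rfl⟩
        exact ⟨r1 + r2, R.add_mem hr1 hr2, h1 + h2, hMadd _ _ hh1 hh2, by ring⟩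
      algebraMap_mem' := fun s => ⟨algebraMap k (PowerSeries k) s, R.algebraMap_mem s, 0,
        hM0, by simp⟩ } with hT
  have part2 : (Algebra.adjoin k ((R : Set (PowerSeries k)) ∪
      {h : PowerSeries k | ∀ g : PowerSeries k, (x1 * h) * g ∈ R}) : Set (PowerSeries k))
      = {f : PowerSeries k | ∃ r ∈ R, ∃ h : PowerSeries k,
          (∀ g : PowerSeries k, (x1 * h) * g ∈ R) ∧ f = r + h} := by
    apply le_antisymm
    · have hle : Algebra.adjoin k ((R : Set (PowerSeries k)) ∪
          {h : PowerSeries k | ∀ g : PowerSeries k, (x1 * h) * g ∈ R}) ≤ T := by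
        apply Algebra.adjoin_le
        rintro f (hf | hf)
        · exact ⟨f, hf, 0, hM0, by simp⟩
        · exact ⟨0, R.zero_mem, f, hf, by simp⟩
      exact fun f hf => hle hf
    · rintro f ⟨r, hr, h, hh, rfl⟩
      exact Subalgebra.add_mem _ (Algebra.subset_adjoin (Or.inl hr))
        (Algebra.subset_adjoin (Or.inr hh))
  refine ⟨part1, part2, ?_⟩
  rw [part2]
  ext f
  simp only [Set.mem_setOf_eq]
  constructor
  · rintro ⟨r, hr, h, hh, rfl⟩
    obtain ⟨w, rfl⟩ := (hMeq h).mp hh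
    exact ⟨r, hr, w, rfl⟩
  · rintro ⟨r, hr, g, rfl⟩
    exact ⟨r, hr, X ^ (c - a1) * g, (hMeq _).mpr ⟨g, rfl⟩, rfl⟩

end
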